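/- In the CHSH scenario with uniform inputs, for every local model Q (a convex mixture of deterministic strategies) and every observed distribution P with win rate ω(P) ≥ 3/4, the KL divergence from the full trial distribution to the local set satisfies inf_{Q ∈ L} D_KL(P‖Q) ≥ D_KL(Bern(ω(P)) ‖ Bern(3/4)). -/

import Mathlib

open Finset

noncomputable def klDiv {Z : Type*} [Fintype Z] (P Q : Z → ℝ) : EReal :=
  if ∀ z, 0 < P z → 0 < Q z then
    ((∑ z, P z * Real.log (P z / Q z) : ℝ) : EReal)
  else ⊤

noncomputable def bernKL (p q : ℝ) : ℝ :=
  p * Real.log (p / q) + (1 - p) * Real.log ((1 - p) / (1 - q))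

/-- Full CHSH trial alphabet: inputs `(x,y)` and outputs `(a,b)`, outputs encoded as
Booleans (`true ↦ +1`, `false ↦ -1`). -/
abbrev Trial := (Bool × Bool) × (Bool × Bool)

/-- Win predicate: the output product equals the CHSH sign `g(x,y)`
(`g(0,0) = -1`, `g = +1` otherwise); the product is `+1` iff the outputs agree. -/
def chshWin (z : Trial) : Prop :=
  (z.2.1 = z.2.2) ↔ ¬(z.1.1 = false ∧ z.1.2 = false)

instance : DecidablePred chshWin := fun z => by unfold chshWin; infer_instance

/-- Win rate of a distribution on the full trial alphabet. -/
noncomputable def winRate (P : Trial → ℝ) : ℝ :=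
  ∑ z ∈ Finset.univ.filter chshWin, P z

/-- Local models with uniform inputs: convex mixtures of deterministic strategies. -/
def LocalSet : Set (Trial → ℝ) :=
  {Q | ∃ (n : ℕ) (w : Fin n → ℝ) (A B : Fin n → Bool → Bool),
    (∀ i, 0 ≤ w i) ∧ ∑ i, w i = 1 ∧
    ∀ z : Trial, Q z = (1/4) * ∑ i, w i *
      (if z.2.1 = A i z.1.1 ∧ z.2.2 = B i z.1.2 then 1 else 0)}

section AUX
-- (aux lemmas pasted below, without the bernKL dup)
lemma log_sum_ineq {Z : Type*} (s : Finset Z) (a b : Z → ℝ)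
    (ha : ∀ z ∈ s, 0 ≤ a z) (hb : ∀ z ∈ s, 0 ≤ b z)
    (hab : ∀ z ∈ s, 0 < a z → 0 < b z) (hB : 0 < ∑ z ∈ s, b z) :
    (∑ z ∈ s, a z) * Real.log ((∑ z ∈ s, a z) / (∑ z ∈ s, b z))
      ≤ ∑ z ∈ s, a z * Real.log (a z / b z) := by
  set A := ∑ z ∈ s, a z with hA
  set B := ∑ z ∈ s, b z with hBdef
  rcases eq_or_lt_of_le (Finset.sum_nonneg ha) with h0 | hApos
  · have hz : ∀ z ∈ s, a z = 0 := by
      intro z hz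
      have := (Finset.sum_eq_zero_iff_of_nonneg ha).mp h0.symm
      exact this z hz
    have hA0 : A = 0 := by rw [hA, ← h0]
    rw [hA0]
    simp only [zero_mul]
    apply Finset.sum_nonneg
    intro z hzs; rw [hz z hzs]; simp
  · have key : ∀ z ∈ s, a z - b z * (A / B) ≤ a z * Real.log (a z / b z) - a z * Real.log (A / B) := by
      intro z hzs
      rcases eq_or_lt_of_le (ha z hzs) with ha0 | hapos
      · rw [← ha0]
        simp only [zero_mul, zero_sub, zero_mul, sub_zero]
        have : 0 ≤ b z * (A / B) := mul_nonneg (hb z hzs) (div_nonneg hApos.le hB.le)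
        linarith
      · have hbpos := hab z hzs hapos
        have hx : 0 < (b z * A) / (a z * B) := by positivity
        have hlog := Real.log_le_sub_one_of_pos hx
        have hrw : Real.log (a z / b z) - Real.log (A / B) = - Real.log ((b z * A) / (a z * B)) := by
          rw [Real.log_div (ne_of_gt hapos) (ne_of_gt hbpos),
              Real.log_div (ne_of_gt hApos) (ne_of_gt hB),
              Real.log_div (by positivity) (by positivity),
              Real.log_mul (ne_of_gt hbpos) (ne_of_gt hApos),
              Real.log_mul (ne_of_gt hapos) (ne_of_gt hB)]
          ring
        rw [← mul_sub, hrw]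
        have : (b z * A) / (a z * B) - 1 ≥ - (1 - (b z * A) / (a z * B)) := by linarith
        have h2 : a z * -Real.log (b z * A / (a z * B)) ≥ a z * (1 - (b z * A) / (a z * B)) := by
          apply mul_le_mul_of_nonneg_left _ hapos.le
          linarith
        have h3 : a z * (1 - (b z * A) / (a z * B)) = a z - b z * (A / B) := by
          field_simp
        linarith
    have hsum := Finset.sum_le_sum key
    have e1 : ∑ z ∈ s, (a z - b z * (A / B)) = A - B * (A / B) := by
      rw [Finset.sum_sub_distrib, ← Finset.sum_mul]
    have e2 : B * (A / B) = A := by field_simp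
    have e3 : ∑ z ∈ s, (a z * Real.log (a z / b z) - a z * Real.log (A / B)) =
        (∑ z ∈ s, a z * Real.log (a z / b z)) - A * Real.log (A / B) := by
      rw [Finset.sum_sub_distrib, ← Finset.sum_mul]
    rw [e1, e2, e3] at hsum
    linarith

lemma bern_mono (p q : ℝ) (hq0 : 0 < q) (hq : q ≤ 3/4) (hp : 3/4 ≤ p) (hp1 : p ≤ 1) :
    bernKL p (3/4) ≤ bernKL p q := by
  have hp0 : 0 < p := by linarith
  have hq1 : q < 1 := by linarith
  unfold bernKL
  have e1 : p * Real.log (p / q) = p * Real.log p - p * Real.log q := by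
    rw [Real.log_div (ne_of_gt hp0) (ne_of_gt hq0)]; ring
  have e2 : p * Real.log (p / (3/4)) = p * Real.log p - p * Real.log (3/4) := by
    rw [Real.log_div (ne_of_gt hp0) (by norm_num)]; ring
  have key : ∀ r : ℝ, 0 < r → r < 1 →
      (1 - p) * Real.log ((1 - p) / (1 - r)) = (1 - p) * Real.log (1 - p) - (1 - p) * Real.log (1 - r) := by
    intro r h1 h2
    rcases eq_or_lt_of_le hp1 with h | h
    · rw [← h]; simp
    · rw [Real.log_div (ne_of_gt (by linarith : (0:ℝ) < 1 - p)) (ne_of_gt (by linarith : (0:ℝ) < 1 - r))]; ring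
  have e3 := key q hq0 hq1
  have e4 := key (3/4) (by norm_num) (by norm_num)
  rw [e1, e2, e3, e4]
  norm_num at e4 ⊢
  have u1 : Real.log q - Real.log (3/4) ≤ (4*q - 3)/3 := by
    have := Real.log_le_sub_one_of_pos (x := q / (3/4)) (by positivity)
    rw [Real.log_div (ne_of_gt hq0) (by norm_num)] at this
    linarith
  have u2 : Real.log q ≤ Real.log (3/4) := Real.log_le_log hq0 hq
  have v1 : Real.log (1 - q) - Real.log (1/4 : ℝ) ≤ 4*(1-q) - 1 := by
    have := Real.log_le_sub_one_of_pos (x := (1-q) / (1/4 : ℝ)) (by norm_num; linarith)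
    rw [Real.log_div (ne_of_gt (by linarith : (0:ℝ) < 1 - q)) (by norm_num)] at this
    linarith
  have v2 : Real.log (1/4 : ℝ) ≤ Real.log (1 - q) := Real.log_le_log (by norm_num) (by linarith)
  nlinarith [mul_nonneg (sub_nonneg.mpr hp) (sub_nonneg.mpr u2), mul_nonneg (sub_nonneg.mpr hp) (sub_nonneg.mpr v2)]

lemma strat_card_le (a b : Bool → Bool) :
    ((Finset.univ.filter chshWin).filter
      (fun z : Trial => z.2.1 = a z.1.1 ∧ z.2.2 = b z.1.2)).card ≤ 3 := by
  revert a b; decide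

lemma strat_card_total (a b : Bool → Bool) :
    (Finset.univ.filter (fun z : Trial => z.2.1 = a z.1.1 ∧ z.2.2 = b z.1.2)).card = 4 := by
  revert a b; decide
end AUX

/-- CHSH witness lower bound on the KL gap to locality, uniform inputs. -/
theorem stmt_7 (P : Trial → ℝ) (hP0 : ∀ z, 0 ≤ P z)
    (hunif : ∀ x y : Bool, ∑ ab : Bool × Bool, P ((x, y), ab) = 1/4)
    (hω : 3/4 ≤ winRate P) :
    ((bernKL (winRate P) (3/4) : ℝ) : EReal) ≤ ⨅ Q ∈ LocalSet, klDiv P Q := by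
  apply le_iInf; intro Q
  apply le_iInf; intro hQ
  obtain ⟨n, w, As, Bs, hw0, hw1, hQf⟩ := hQ
  -- Q is nonneg
  have hQ0 : ∀ z, 0 ≤ Q z := by
    intro z; rw [hQf z]
    apply mul_nonneg (by norm_num)
    apply Finset.sum_nonneg
    intro i _
    exact mul_nonneg (hw0 i) (by positivity)
  -- total mass of P is 1
  have hPsum : ∑ z : Trial, P z = 1 := by
    rw [Fintype.sum_prod_type]
    rw [Fintype.sum_prod_type]
    simp only [hunif]
    norm_num
  -- total mass of Q is 1
  have hQsum : ∑ z : Trial, Q z = 1 := by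
    simp only [hQf]
    rw [← Finset.mul_sum, Finset.sum_comm]
    have : ∀ i, ∑ z : Trial, w i * (if z.2.1 = As i z.1.1 ∧ z.2.2 = Bs i z.1.2 then (1:ℝ) else 0)
        = w i * 4 := by
      intro i
      rw [← Finset.mul_sum, Finset.sum_boole, strat_card_total (As i) (Bs i)]
      norm_num
    rw [Finset.sum_congr rfl (fun i _ => this i), ← Finset.sum_mul, hw1]
    norm_num
  -- win rate of Q at most 3/4
  have hQwin : winRate Q ≤ 3/4 := by
    unfold winRate
    simp only [hQf]
    rw [← Finset.mul_sum, Finset.sum_comm]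
    have hb : ∀ i ∈ Finset.univ (α := Fin n),
        ∑ z ∈ Finset.univ.filter chshWin, w i * (if z.2.1 = As i z.1.1 ∧ z.2.2 = Bs i z.1.2 then (1:ℝ) else 0)
        ≤ w i * 3 := by
      intro i _
      rw [← Finset.mul_sum, Finset.sum_boole]
      apply mul_le_mul_of_nonneg_left _ (hw0 i)
      exact_mod_cast strat_card_le (As i) (Bs i)
    have := Finset.sum_le_sum hb
    rw [← Finset.sum_mul, hw1] at this
    linarith
  unfold klDiv
  split_ifs with h
  · rw [EReal.coe_le_coe_iff]
    set W := Finset.univ.filter chshWin with hW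
    set ωP := winRate P with hωP
    set ωQ := winRate Q with hωQ
    have hWP : ∑ z ∈ W, P z = ωP := rfl
    have hWQ : ∑ z ∈ W, Q z = ωQ := rfl
    have hWc : Finset.univ.filter (fun z => ¬ chshWin z) = Wᶜ := by
      rw [hW, Finset.compl_filter]
    have hsplit : ∀ f : Trial → ℝ, ∑ z : Trial, f z = ∑ z ∈ W, f z + ∑ z ∈ Wᶜ, f z := by
      intro f
      rw [← hWc, hW]
      exact (Finset.sum_filter_add_sum_filter_not _ _ _).symm
    have hPc : ∑ z ∈ Wᶜ, P z = 1 - ωP := by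
      have := hsplit P; rw [hPsum, hWP] at this; linarith
    have hQc : ∑ z ∈ Wᶜ, Q z = 1 - ωQ := by
      have := hsplit Q; rw [hQsum, hWQ] at this; linarith
    -- positivity of ωQ
    have hωQpos : 0 < ωQ := by
      have hPW : (0:ℝ) < ∑ z ∈ W, P z := by rw [hWP]; linarith
      obtain ⟨z, hzW, hz⟩ : ∃ z ∈ W, 0 < P z := by
        by_contra hc
        push_neg at hc
        have : ∑ z ∈ W, P z ≤ 0 := Finset.sum_nonpos fun z hz => le_of_not_gt (by
          intro h'; exact absurd (le_of_lt h') (not_le.mpr (lt_of_le_of_ne (hc z hz) (ne_of_gt h'))))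
        linarith
      have hQz := h z hz
      rw [← hWQ]
      exact lt_of_lt_of_le hQz (Finset.single_le_sum (fun z _ => hQ0 z) hzW)
    -- data processing on W
    have hDP1 : ωP * Real.log (ωP / ωQ) ≤ ∑ z ∈ W, P z * Real.log (P z / Q z) := by
      have := log_sum_ineq W P Q (fun z _ => hP0 z) (fun z _ => hQ0 z) (fun z _ => h z)
        (by rw [hWQ]; exact hωQpos)
      rwa [hWP, hWQ] at this
    -- data processing on Wᶜ
    have hDP2 : (1 - ωP) * Real.log ((1 - ωP) / (1 - ωQ)) ≤ ∑ z ∈ Wᶜ, P z * Real.log (P z / Q z) := by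
      have := log_sum_ineq Wᶜ P Q (fun z _ => hP0 z) (fun z _ => hQ0 z) (fun z _ => h z)
        (by rw [hQc]; linarith)
      rwa [hPc, hQc] at this
    have hωP1 : ωP ≤ 1 := by
      have hnn : (0:ℝ) ≤ ∑ z ∈ Wᶜ, P z := Finset.sum_nonneg fun z _ => hP0 z
      rw [hPc] at hnn; linarith
    calc bernKL ωP (3/4) ≤ bernKL ωP ωQ := bern_mono ωP ωQ hωQpos hQwin hω hωP1
      _ = ωP * Real.log (ωP / ωQ) + (1 - ωP) * Real.log ((1 - ωP) / (1 - ωQ)) := rfl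
      _ ≤ ∑ z ∈ W, P z * Real.log (P z / Q z) + ∑ z ∈ Wᶜ, P z * Real.log (P z / Q z) :=
          add_le_add hDP1 hDP2
      _ = ∑ z : Trial, P z * Real.log (P z / Q z) := (hsplit _).symm
  · exact le_top
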